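/- The k-conjugation map λ ↦ λ^{ω_k} := 𝔭(𝔠(λ)'), sending a k-bounded partition λ to the partition whose parts are the numbers of k-bounded hooks in the columns of the (k+1)-core 𝔠(λ), is an involution on the set of k-bounded partitions. -/

import Mathlib

open scoped Classical

/-- A partition given as a weakly decreasing, finitely supported
function `ℕ → ℕ` (row `i`, counted from the bottom, has `p i` cells). -/
def IsPartitionFun (p : ℕ → ℕ) : Prop :=
  (∀ i, p (i + 1) ≤ p i) ∧ ∃ N, ∀ i, N ≤ i → p i = 0

/-- Hook length of the square `(i, j)` (0-indexed) in the partition `p`. -/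
noncomputable def hookLen (p : ℕ → ℕ) (i j : ℕ) : ℕ :=
  (p i - j) + Set.ncard {i' : ℕ | i < i' ∧ j < p i'}

/-- A partition is an `m`-core if no cell has hook length `m`. -/
def IsCore (m : ℕ) (p : ℕ → ℕ) : Prop :=
  ∀ i j, j < p i → hookLen p i j ≠ m

/-- Number of cells of row `i` of `p` whose hook length is at most `k`. -/
noncomputable def rowKB (k : ℕ) (p : ℕ → ℕ) (i : ℕ) : ℕ :=
  Set.ncard {j : ℕ | j < p i ∧ hookLen p i j ≤ k}

/-- Number of cells of column `j` of `p` whose hook length is at most `k`. -/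
noncomputable def colKB (k : ℕ) (p : ℕ → ℕ) (j : ℕ) : ℕ :=
  Set.ncard {i : ℕ | j < p i ∧ hookLen p i j ≤ k}

/-- The `(k+1)`-residue of the square `(i, j)`, namely `j - i mod (k+1)`. -/
def res (k i j : ℕ) : ZMod (k + 1) := (j : ZMod (k + 1)) - (i : ZMod (k + 1))

/-- The conjugate partition. -/
noncomputable def conjFun (p : ℕ → ℕ) (j : ℕ) : ℕ := Set.ncard {i : ℕ | j < p i}


/-- `k`-conjugation is an involution on `k`-bounded partitions: if `γ = 𝔠(lam)` is
the `(k+1)`-core corresponding to `lam`, `μ = 𝔭(γ')` is the `k`-conjugate of `lam`,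
and `δ = 𝔠(μ)`, then `𝔭(δ') = lam`. -/
lemma part_antitone {p : ℕ → ℕ} (hp : IsPartitionFun p) : Antitone p :=
  antitone_nat_of_succ_le hp.1

lemma ncard_Iio (n : ℕ) : (Set.Iio n).ncard = n := by
  rw [← Finset.coe_range, Set.ncard_coe_finset, Finset.card_range]

lemma downclosed_eq_Iio {S : Set ℕ} (hfin : S.Finite)
    (hdc : ∀ a b, a ≤ b → b ∈ S → a ∈ S) : S = Set.Iio S.ncard := by
  rcases S.eq_empty_or_nonempty with h | h
  · subst h
    simp only [Set.ncard_empty]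
    ext x; simp
  · obtain ⟨M, hMS, hmax⟩ := Set.Finite.exists_maximalFor id S hfin h
    have hS : S = Set.Iio (M + 1) := by
      ext x
      constructor
      · intro hx
        simp only [Set.mem_Iio]
        by_contra hc
        push_neg at hc
        have := hmax hx (by simp only [id_eq]; omega)
        simp only [id_eq] at this
        omega
      · intro hx
        exact hdc x M (by simpa [Set.mem_Iio] using Nat.lt_succ_iff.mp hx) hMS
    rw [hS, ncard_Iio]

lemma conj_fin {p : ℕ → ℕ} (hp : IsPartitionFun p) (j : ℕ) :
    {i : ℕ | j < p i}.Finite := by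
  obtain ⟨N, hN⟩ := hp.2
  apply Set.Finite.subset (Set.finite_Iio N)
  intro i hi
  simp only [Set.mem_setOf_eq] at hi
  by_contra h
  simp only [Set.mem_Iio, not_lt] at h
  rw [hN i h] at hi; omega

lemma mem_conj_iff {p : ℕ → ℕ} (hp : IsPartitionFun p) (i j : ℕ) :
    i < conjFun p j ↔ j < p i := by
  have hdc : ∀ a b : ℕ, a ≤ b → b ∈ {i : ℕ | j < p i} → a ∈ {i : ℕ | j < p i} := by
    intro a b hab hb
    exact lt_of_lt_of_le hb (part_antitone hp hab)
  have := downclosed_eq_Iio (conj_fin hp j) hdc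
  constructor
  · intro h
    have : i ∈ Set.Iio (conjFun p j) := h
    rw [conjFun] at this
    rw [← downclosed_eq_Iio (conj_fin hp j) hdc] at this
    exact this
  · intro h
    have hi : i ∈ {i : ℕ | j < p i} := h
    rw [downclosed_eq_Iio (conj_fin hp j) hdc] at hi
    exact hi

lemma conj_part {p : ℕ → ℕ} (hp : IsPartitionFun p) : IsPartitionFun (conjFun p) := by
  constructor
  · intro j
    apply Set.ncard_le_ncard _ (conj_fin hp j)
    intro i hi
    simp only [Set.mem_setOf_eq] at *
    omega
  · exact ⟨p 0, fun j hj => by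
      have : {i : ℕ | j < p i} = ∅ := by
        ext i; simp only [Set.mem_setOf_eq, Set.mem_empty_iff_false, iff_false, not_lt]
        exact le_trans (part_antitone hp (Nat.zero_le i)) hj
      simp [conjFun, this]⟩

lemma conj_conj {p : ℕ → ℕ} (hp : IsPartitionFun p) (i : ℕ) :
    conjFun (conjFun p) i = p i := by
  have : {j : ℕ | i < conjFun p j} = Set.Iio (p i) := by
    ext j; simp [mem_conj_iff hp i j, Set.mem_Iio]
  rw [conjFun, this, ncard_Iio]







lemma ncard_Ioo (a b : ℕ) : (Set.Ioo a b).ncard = b - a - 1 := by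
  rw [← Finset.coe_Ioo, Set.ncard_coe_finset, Nat.card_Ioo]

lemma hook_conj {p : ℕ → ℕ} (hp : IsPartitionFun p) {i j : ℕ} (hij : j < p i) :
    hookLen (conjFun p) j i = hookLen p i j := by
  have h1 : i < conjFun p j := (mem_conj_iff hp i j).2 hij
  have e1 : {j' : ℕ | j < j' ∧ i < conjFun p j'} = Set.Ioo j (p i) := by
    ext j'; simp [mem_conj_iff hp i j', Set.mem_Ioo, and_comm]
  have e2 : {i' : ℕ | i < i' ∧ j < p i'} = Set.Ioo i (conjFun p j) := by
    ext i'; simp [← mem_conj_iff hp i' j, Set.mem_Ioo, and_comm]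
  rw [hookLen, hookLen, e1, e2, ncard_Ioo, ncard_Ioo]
  omega

lemma core_conj {p : ℕ → ℕ} (hp : IsPartitionFun p) {m : ℕ} (hc : IsCore m p) :
    IsCore m (conjFun p) := by
  intro a b hb
  have hab : a < p b := (mem_conj_iff hp b a).1 hb
  rw [hook_conj hp hab]
  exact hc b a hab

noncomputable def legs (p : ℕ → ℕ) (i j : ℕ) : ℕ := Set.ncard {i' : ℕ | i < i' ∧ j < p i'}

noncomputable def ff (p : ℕ → ℕ) (i j : ℕ) : ℤ := (j : ℤ) - legs p i j

noncomputable def GG (p : ℕ → ℕ) (i : ℕ) (x : ℤ) : ℕ := Set.ncard {j : ℕ | ff p i j ≤ x}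

lemma legs_fin {p : ℕ → ℕ} (hp : IsPartitionFun p) (i j : ℕ) :
    {i' : ℕ | i < i' ∧ j < p i'}.Finite :=
  Set.Finite.subset (conj_fin hp j) (fun i' hi' => hi'.2)

lemma legs_antitone {p : ℕ → ℕ} (hp : IsPartitionFun p) (i : ℕ) {j j' : ℕ} (h : j ≤ j') :
    legs p i j' ≤ legs p i j := by
  apply Set.ncard_le_ncard _ (legs_fin hp i j)
  intro i' hi'
  simp only [Set.mem_setOf_eq] at hi' ⊢
  omega

lemma legs_zero {p : ℕ → ℕ} (hp : IsPartitionFun p) {i j : ℕ} (h : p i ≤ j) :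
    legs p i j = 0 := by
  rw [legs]
  convert Set.ncard_empty ℕ
  ext i'
  simp only [Set.mem_setOf_eq, Set.mem_empty_iff_false, iff_false, not_and, not_lt]
  intro hi'
  exact le_trans (le_trans (part_antitone hp hi'.le) h) (le_refl j)

lemma hookLen_eq_legs (p : ℕ → ℕ) (i j : ℕ) : hookLen p i j = (p i - j) + legs p i j := rfl

lemma ff_strictMono {p : ℕ → ℕ} (hp : IsPartitionFun p) (i : ℕ) : StrictMono (ff p i) := by
  apply strictMono_nat_of_lt_succ
  intro j
  have := legs_antitone hp i (by omega : j ≤ j + 1)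
  show ff p i j < ff p i (j + 1)
  rw [ff, ff]
  push_cast
  omega

lemma GG_fin {p : ℕ → ℕ} (hp : IsPartitionFun p) (i : ℕ) (x : ℤ) :
    {j : ℕ | ff p i j ≤ x}.Finite := by
  apply Set.Finite.subset (Set.finite_Iic ((x + legs p i 0).toNat))
  intro j hj
  simp only [Set.mem_setOf_eq, ff] at hj
  have := legs_antitone hp i (Nat.zero_le j)
  simp only [Set.mem_Iic]
  omega

lemma rowKB_eq_GG {p : ℕ → ℕ} (hp : IsPartitionFun p) (k i : ℕ) :
    rowKB k p i + GG p i ((p i : ℤ) - k - 1) = p i := by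
  set L := p i with hL
  have hsub : {j : ℕ | ff p i j ≤ (L : ℤ) - k - 1} ⊆ Set.Iio L := by
    intro j hj
    simp only [Set.mem_setOf_eq, ff] at hj
    simp only [Set.mem_Iio]
    by_contra h
    push_neg at h
    rw [legs_zero hp (by omega)] at hj
    omega
  have hdisj : Disjoint {j : ℕ | j < L ∧ hookLen p i j ≤ k} {j : ℕ | ff p i j ≤ (L : ℤ) - k - 1} := by
    rw [Set.disjoint_left]
    intro j hj1 hj2
    simp only [Set.mem_setOf_eq] at hj1 hj2
    rw [hookLen_eq_legs] at hj1
    rw [ff] at hj2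
    omega
  have hunion : {j : ℕ | j < L ∧ hookLen p i j ≤ k} ∪ {j : ℕ | ff p i j ≤ (L : ℤ) - k - 1} = Set.Iio L := by
    apply Set.Subset.antisymm
    · intro j hj
      rcases hj with hj | hj
      · exact hj.1
      · exact hsub hj
    · intro j hj
      simp only [Set.mem_Iio] at hj
      by_cases hh : hookLen p i j ≤ k
      · exact Or.inl ⟨hj, hh⟩
      · right
        simp only [Set.mem_setOf_eq, ff]
        rw [hookLen_eq_legs] at hh
        omega
  have := Set.ncard_union_eq hdisj (Set.Finite.subset (Set.finite_Iio L) (fun j hj => hj.1))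
    (GG_fin hp i _)
  rw [hunion, ncard_Iio] at this
  rw [rowKB, GG, ← this]

lemma core_ff {p : ℕ → ℕ} (hp : IsPartitionFun p) {k : ℕ} (hc : IsCore (k + 1) p) (i : ℕ) :
    ∀ j, ff p i j ≠ (p i : ℤ) - k - 1 := by
  intro j hj
  rw [ff] at hj
  by_cases h : j < p i
  · have := hc i j h
    rw [hookLen_eq_legs] at this
    omega
  · push_neg at h
    rw [legs_zero hp h] at hj
    omega

lemma GG_gap {p : ℕ → ℕ} (hp : IsPartitionFun p) (i : ℕ) {v x y : ℤ}
    (hv : ∀ j, ff p i j ≠ v) (hxv : x < v) (hvy : v ≤ y) :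
    GG p i y ≤ GG p i x + ((y - x).toNat - 1) := by
  have hfin : (Set.Ioc x y).Finite := Set.finite_Ioc x y
  have himg : ff p i '' {j : ℕ | x < ff p i j ∧ ff p i j ≤ y} ⊆ Set.Ioc x y \ {v} := by
    rintro z ⟨j, hj, rfl⟩
    simp only [Set.mem_setOf_eq] at hj
    simp only [Set.mem_diff, Set.mem_Ioc, Set.mem_singleton_iff]
    exact ⟨⟨hj.1, hj.2⟩, hv j⟩
  have hinj := (ff_strictMono hp i).injective
  have hmid : {j : ℕ | x < ff p i j ∧ ff p i j ≤ y}.ncard ≤ (y - x).toNat - 1 := by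
    have h1 : {j : ℕ | x < ff p i j ∧ ff p i j ≤ y}.ncard
        = (ff p i '' {j : ℕ | x < ff p i j ∧ ff p i j ≤ y}).ncard :=
      (Set.ncard_image_of_injective _ hinj).symm
    rw [h1]
    have h2 : (Set.Ioc x y \ {v}).ncard = (y - x).toNat - 1 := by
      rw [Set.ncard_diff_singleton_of_mem (Set.mem_Ioc.mpr ⟨hxv, hvy⟩)]
      congr 1
      rw [← Finset.coe_Ioc, Set.ncard_coe_finset, Int.card_Ioc]
    rw [← h2]
    exact Set.ncard_le_ncard himg hfin.diff
  have hcover : {j : ℕ | ff p i j ≤ y} ⊆ {j : ℕ | ff p i j ≤ x} ∪ {j : ℕ | x < ff p i j ∧ ff p i j ≤ y} := by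
    intro j hj
    simp only [Set.mem_setOf_eq] at hj
    by_cases h : ff p i j ≤ x
    · exact Or.inl h
    · exact Or.inr ⟨by omega, hj⟩
  calc GG p i y ≤ ({j : ℕ | ff p i j ≤ x} ∪ {j : ℕ | x < ff p i j ∧ ff p i j ≤ y}).ncard :=
        Set.ncard_le_ncard hcover (Set.Finite.union (GG_fin hp i x)
          (Set.Finite.subset (GG_fin hp i y) (fun j hj => hj.2)))
    _ ≤ GG p i x + {j : ℕ | x < ff p i j ∧ ff p i j ≤ y}.ncard :=
        Set.ncard_union_le _ _
    _ ≤ GG p i x + ((y - x).toNat - 1) := by omega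

lemma legs_congr {p q : ℕ → ℕ} {i : ℕ} (htail : ∀ i', i < i' → p i' = q i') (j : ℕ) :
    legs p i j = legs q i j := by
  rw [legs, legs]
  congr 1
  ext i'
  simp only [Set.mem_setOf_eq]
  constructor
  · intro h; exact ⟨h.1, by rw [← htail i' h.1]; exact h.2⟩
  · intro h; exact ⟨h.1, by rw [htail i' h.1]; exact h.2⟩

lemma ff_congr {p q : ℕ → ℕ} {i : ℕ} (htail : ∀ i', i < i' → p i' = q i') (j : ℕ) :
    ff p i j = ff q i j := by
  rw [ff, ff, legs_congr htail]

lemma GG_congr {p q : ℕ → ℕ} {i : ℕ} (htail : ∀ i', i < i' → p i' = q i') (x : ℤ) :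
    GG p i x = GG q i x := by
  rw [GG, GG]
  congr 1
  ext j
  simp [ff_congr htail]

lemma key_lt {p q : ℕ → ℕ} {k i : ℕ} (hp : IsPartitionFun p) (hq : IsPartitionFun q)
    (hqc : IsCore (k + 1) q) (htail : ∀ i', i < i' → p i' = q i') (hlt : p i < q i) :
    rowKB k p i < rowKB k q i := by
  have ep := rowKB_eq_GG hp k i
  have eq := rowKB_eq_GG hq k i
  rw [GG_congr htail] at ep
  have hv : ∀ j, ff q i j ≠ (q i : ℤ) - k - 1 := core_ff hq hqc i
  have hgap := GG_gap hq i hv (show (p i : ℤ) - k - 1 < (q i : ℤ) - k - 1 by push_cast; omega)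
    (le_refl ((q i : ℤ) - k - 1))
  have htn : (((q i : ℤ) - k - 1) - ((p i : ℤ) - k - 1)).toNat = q i - p i := by omega
  rw [htn] at hgap
  omega

lemma core_inj {p q : ℕ → ℕ} {k : ℕ} (hp : IsPartitionFun p) (hq : IsPartitionFun q)
    (hpc : IsCore (k + 1) p) (hqc : IsCore (k + 1) q)
    (hrow : ∀ i, rowKB k p i = rowKB k q i) : ∀ i, p i = q i := by
  obtain ⟨N1, hN1⟩ := hp.2
  obtain ⟨N2, hN2⟩ := hq.2
  set N := max N1 N2 with hN
  have key : ∀ m : ℕ, ∀ i : ℕ, N ≤ i + m → p i = q i := by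
    intro m
    induction m with
    | zero =>
      intro i hi
      rw [hN1 i (by omega), hN2 i (by omega)]
    | succ m ih =>
      intro i hi
      by_cases hNi : N ≤ i + m
      · exact ih i hNi
      · have htail : ∀ i', i < i' → p i' = q i' := by
          intro i' hi'
          exact ih i' (by omega)
        rcases lt_trichotomy (p i) (q i) with h | h | h
        · exact absurd (hrow i) (Nat.ne_of_lt (key_lt hp hq hqc htail h))
        · exact h
        · have htail' : ∀ i', i < i' → q i' = p i' := fun i' hi' => (htail i' hi').symm
          exact absurd (hrow i).symm (Nat.ne_of_lt (key_lt hq hp hpc htail' h))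
  intro i
  exact key N i (by omega)

theorem stmt3 (k : ℕ) (lam μ γ δ : ℕ → ℕ)
    (hlam : IsPartitionFun lam) (hlamb : ∀ i, lam i ≤ k)
    (hγ : IsPartitionFun γ) (hγcore : IsCore (k + 1) γ)
    (hδ : IsPartitionFun δ) (hδcore : IsCore (k + 1) δ)
    (h1 : ∀ i, lam i = rowKB k γ i)
    (h2 : ∀ i, μ i = rowKB k (conjFun γ) i)
    (h3 : ∀ i, μ i = rowKB k δ i) :
    ∀ i, lam i = rowKB k (conjFun δ) i := by
  have hδeq : δ = conjFun γ :=
    funext (core_inj hδ (conj_part hγ) hδcore (core_conj hγ hγcore)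
      (fun i => by rw [← h3 i, h2 i]))
  have hcd : conjFun δ = γ := by
    rw [hδeq]
    funext j
    exact conj_conj hγ j
  intro i
  rw [hcd, h1 i]
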